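/- Let k ≥ 1. Then for all m ≥ 0, all 0 ≤ j ≤ k-1, and all s ≥ 0, the number Q_{km+j,s}^{kℕ} of permutations of {1,…,km+j} with exactly s descents whose bottom is divisible by k satisfies: Q_{km+j,s}^{kℕ} = ((k-1)m+j)! · Σ_{r=0}^{s} (-1)^{s-r} · C((k-1)m+j+r, r) · C(km+j+1, s-r) · Π_{i=1}^{m} (1+r+(k-1)i), and also Q_{km+j,s}^{kℕ} = ((k-1)m+j)! · Σ_{r=0}^{m-s} (-1)^{m-s-r} · C((k-1)m+j+r, r) · C(km+j+1, m-s-r) · Π_{i=0}^{m-1} (r+j+(k-1)i). -/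

import Mathlib

open scoped Classical
open Finset

/-- Number of `X,Y`-descents of the word `w = w_1 ⋯ w_n` (indices `i` with
`w_i > w_{i+1}`, `w_i ∈ X`, `w_{i+1} ∈ Y`). -/
noncomputable def desXY (X Y : Set ℕ) {n : ℕ} (w : Fin n → ℕ) : ℕ :=
  (Finset.univ.filter (fun i : Fin n =>
    ∃ h : i.1 + 1 < n, w i > w ⟨i.1 + 1, h⟩ ∧ w i ∈ X ∧ w ⟨i.1 + 1, h⟩ ∈ Y)).card

/-- `permCount X Y n s` is the number of permutations `σ` of `{1,…,n}` with
exactly `s` `X,Y`-descents. -/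
noncomputable def permCount (X Y : Set ℕ) (n s : ℕ) : ℕ :=
  (Finset.univ.filter (fun σ : Equiv.Perm (Fin n) =>
    desXY X Y (fun i => (σ i : ℕ) + 1) = s)).card

/-- `α_{S,n,j} = |{x : j < x ≤ n, x ∉ S}|`. -/
noncomputable def alphaSet (S : Set ℕ) (n j : ℕ) : ℕ :=
  ((Finset.Ioc j n).filter (fun x => x ∉ S)).card

/-- `β_{S,n,j} = |{x : 1 ≤ x < j, x ∉ S}|`. -/
noncomputable def betaSet (S : Set ℕ) (j : ℕ) : ℕ :=
  ((Finset.Ico 1 j).filter (fun x => x ∉ S)).card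

open Polynomial
set_option maxHeartbeats 1000000



lemma chooseZ (N e : ℕ) :
    ((e:ℤ)+1) * ((N.choose (e+1) : ℕ) : ℤ) = ((N:ℤ) - e) * (N.choose e : ℤ) := by
  rcases le_or_gt (e+1) N with h | h
  · have h2 := Nat.choose_succ_right_eq N e
    have h3 : ((N.choose (e+1) * (e+1) : ℕ) : ℤ) = ((N.choose e * (N - e) : ℕ) : ℤ) := by
      exact_mod_cast congrArg Nat.cast h2
    push_cast [Nat.cast_sub (by omega : e ≤ N)] at h3
    linarith
  · rw [Nat.choose_eq_zero_of_lt h]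
    rcases eq_or_lt_of_le (Nat.lt_succ_iff.mp h) with h2 | h2
    · rw [h2]; push_cast; ring
    · rw [Nat.choose_eq_zero_of_lt h2]; push_cast; ring

lemma pascalZ (N e : ℕ) :
    (((N+1).choose (e+1) : ℕ) : ℤ) = (N.choose e : ℤ) + (N.choose (e+1) : ℤ) := by
  rw [Nat.choose_succ_succ]; push_cast; ring

lemma succ_mul_chooseZ (A r : ℕ) :
    ((A:ℤ)+1) * ((A+1+r).choose r : ℤ) = ((A:ℤ)+1+(r:ℤ)) * ((A+r).choose r : ℤ) := by
  have h1 : (A+1+r).choose r = (A+1+r).choose (A+1) := by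
    rw [show A+1+r = (A+1)+r by ring, Nat.choose_symm_add]
  have h2 : (A+r).choose r = (A+r).choose A := by
    rw [show A+r = A+r by rfl, Nat.choose_symm_add]
  have h3 := Nat.add_one_mul_choose_eq (A+r) A
  rw [h1, h2]
  have : (A+r).succ * (A+r).choose A = (A+r+1).choose (A+1) * (A+1) := h3
  have hc : ((A+r).succ * (A+r).choose A : ℕ) = ((A+r+1).choose (A+1) * (A+1) : ℕ) := this
  have := congrArg (Nat.cast (R := ℤ)) hc
  push_cast at this
  rw [show A+1+r = A+r+1 by ring]
  linarith

lemma core1 (A m s : ℕ) (g : ℕ → ℤ) :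
    ∑ r ∈ range (s+1), (-1)^(s-r) * ((A:ℤ)+1+r) * ((A+r).choose r : ℤ) *
        ((A+m+2).choose (s-r) : ℤ) * g r
    = ((A:ℤ)+1+s) * ∑ r ∈ range (s+1), (-1)^(s-r) * ((A+r).choose r : ℤ) *
        ((A+m+1).choose (s-r) : ℤ) * g r
    + ((m:ℤ)+1-s) * ∑ r ∈ range s, (-1)^(s-1-r) * ((A+r).choose r : ℤ) *
        ((A+m+1).choose (s-1-r) : ℤ) * g r := by
  have key : ∀ r ∈ range s,
      (-1:ℤ)^(s-r) * ((A:ℤ)+1+r) * ((A+r).choose r : ℤ) * ((A+m+2).choose (s-r) : ℤ) * g r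
      = ((A:ℤ)+1+s) * ((-1)^(s-r) * ((A+r).choose r : ℤ) * ((A+m+1).choose (s-r) : ℤ) * g r)
      + ((m:ℤ)+1-s) * ((-1)^(s-1-r) * ((A+r).choose r : ℤ) * ((A+m+1).choose (s-1-r) : ℤ) * g r) := by
    intro r hr
    rw [mem_range] at hr
    obtain ⟨e, rfl⟩ : ∃ e, s = r + e + 1 := ⟨s - r - 1, by omega⟩
    have h1 : r + e + 1 - r = e + 1 := by omega
    have h2 : r + e + 1 - 1 - r = e := by omega
    rw [h1, h2]
    have P := pascalZ (A+m+1) e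
    have Q := chooseZ (A+m+1) e
    rw [show A+m+1+1 = A+m+2 by ring] at P
    push_cast at P Q ⊢
    linear_combination (-((-1:ℤ)^e * g r * ((A+r).choose r : ℤ)) * ((A:ℤ)+1+(r:ℤ))) * P
      + ((-1:ℤ)^e * g r * ((A+r).choose r : ℤ)) * Q
  have hsum := sum_congr rfl key
  rw [sum_add_distrib, ← mul_sum, ← mul_sum] at hsum
  rw [sum_range_succ, sum_range_succ]
  simp only [Nat.sub_self, pow_zero, Nat.choose_zero_right, Nat.cast_one]
  push_cast
  linear_combination hsum

lemma core2 (A m u : ℕ) (g : ℕ → ℤ) :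
    ∑ r ∈ range (u+2), (-1)^(u+1-r) * (r:ℤ) * ((A+r).choose r : ℤ) *
        ((A+m+2).choose (u+1-r) : ℤ) * g r
    = ((A:ℤ)+m+1-u) * ∑ r ∈ range (u+1), (-1)^(u-r) * ((A+r).choose r : ℤ) *
        ((A+m+1).choose (u-r) : ℤ) * g r
    + ((u:ℤ)+1) * ∑ r ∈ range (u+2), (-1)^(u+1-r) * ((A+r).choose r : ℤ) *
        ((A+m+1).choose (u+1-r) : ℤ) * g r := by
  have key : ∀ r ∈ range (u+1),
      (-1:ℤ)^(u+1-r) * (r:ℤ) * ((A+r).choose r : ℤ) * ((A+m+2).choose (u+1-r) : ℤ) * g r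
      = ((A:ℤ)+m+1-u) * ((-1)^(u-r) * ((A+r).choose r : ℤ) * ((A+m+1).choose (u-r) : ℤ) * g r)
      + ((u:ℤ)+1) * ((-1)^(u+1-r) * ((A+r).choose r : ℤ) * ((A+m+1).choose (u+1-r) : ℤ) * g r) := by
    intro r hr
    rw [mem_range] at hr
    obtain ⟨e, rfl⟩ : ∃ e, u = r + e := ⟨u - r, by omega⟩
    have h1 : r + e + 1 - r = e + 1 := by omega
    have h2 : r + e - r = e := by omega
    rw [h1, h2]
    have P := pascalZ (A+m+1) e
    have Q := chooseZ (A+m+1) e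
    rw [show A+m+1+1 = A+m+2 by ring] at P
    push_cast at P Q ⊢
    linear_combination (-((-1:ℤ)^e * g r) * ((A+r).choose r : ℤ) * (r:ℤ)) * P
      + ((-1:ℤ)^e * g r * ((A+r).choose r : ℤ)) * Q
  have hsum := sum_congr rfl key
  rw [sum_add_distrib, ← mul_sum, ← mul_sum] at hsum
  rw [sum_range_succ, sum_range_succ (n := u+1)]
  simp only [Nat.sub_self, pow_zero, Nat.choose_zero_right, Nat.cast_one]
  push_cast
  linear_combination hsum


lemma succ_mul_chooseZ' (A r : ℕ) :
    ((A:ℤ)+1) * ((A+1+r).choose r : ℤ) = ((A:ℤ)+1+(r:ℤ)) * ((A+r).choose r : ℤ) := by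
  have h1 : (A+1+r).choose r = (A+1+r).choose (A+1) := by
    rw [show A+1+r = (A+1)+r by ring, Nat.choose_symm_add]
  have h2 : (A+r).choose r = (A+r).choose A := Nat.choose_symm_add.symm
  have hc : ((A+r).succ * (A+r).choose A : ℕ) = ((A+r+1).choose (A+1) * (A+1) : ℕ) :=
    Nat.add_one_mul_choose_eq (A+r) A
  have := congrArg (Nat.cast (R := ℤ)) hc
  push_cast at this
  rw [h1, h2, show A+1+r = A+r+1 by ring]
  linarith

lemma binom_shift (N : ℕ) (v : ℕ → ℤ) :
    ∑ e ∈ range (N+2), (-1)^e * ((N+1).choose e : ℤ) * v e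
    = ∑ e ∈ range (N+1), (-1)^e * (N.choose e : ℤ) * (v e - v (e+1)) := by
  have h1 : ∑ e ∈ range (N+2), (-1:ℤ)^e * ((N+1).choose e : ℤ) * v e
      = (∑ x ∈ range (N+1), (-1:ℤ)^(x+1) * ((N+1).choose (x+1) : ℤ) * v (x+1)) + v 0 := by
    rw [Finset.sum_range_succ']; simp
  have h2 : ∀ x ∈ range (N+1), (-1:ℤ)^(x+1) * ((N+1).choose (x+1) : ℤ) * v (x+1)
      = -((-1:ℤ)^x * (N.choose x : ℤ) * v (x+1)) - (-1:ℤ)^x * (N.choose (x+1) : ℤ) * v (x+1) := by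
    intro x _
    rw [Nat.choose_succ_succ]
    push_cast
    ring
  have h3 : ∑ x ∈ range (N+1), (-1:ℤ)^x * (N.choose (x+1) : ℤ) * v (x+1)
      = v 0 - ∑ x ∈ range (N+1), (-1:ℤ)^x * (N.choose x : ℤ) * v x := by
    have h4 : ∑ e ∈ range (N+2), (-1:ℤ)^e * (N.choose e : ℤ) * v e
        = (∑ x ∈ range (N+1), (-1:ℤ)^(x+1) * (N.choose (x+1) : ℤ) * v (x+1)) + v 0 := by
      rw [Finset.sum_range_succ']; simp
    rw [Finset.sum_range_succ, Nat.choose_succ_self] at h4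
    simp only [Nat.cast_zero, mul_zero, zero_mul, add_zero] at h4
    have h5 : ∀ x ∈ range (N+1), (-1:ℤ)^(x+1) * (N.choose (x+1) : ℤ) * v (x+1)
        = -((-1:ℤ)^x * (N.choose (x+1) : ℤ) * v (x+1)) := by intro x _; ring
    rw [sum_congr rfl h5, Finset.sum_neg_distrib] at h4
    linarith
  have h6 : ∀ e ∈ range (N+1), (-1:ℤ)^e * (N.choose e : ℤ) * (v e - v (e+1))
      = (-1:ℤ)^e * (N.choose e : ℤ) * v e - (-1:ℤ)^e * (N.choose e : ℤ) * v (e+1) := by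
    intro e _; ring
  rw [h1, sum_congr rfl h2, sum_sub_distrib, Finset.sum_neg_distrib, h3,
    sum_congr rfl h6, sum_sub_distrib]
  ring

lemma findiff (N : ℕ) : ∀ (p : Polynomial ℤ), p.natDegree < N → ∀ x : ℤ,
    ∑ e ∈ range (N+1), (-1)^e * (N.choose e : ℤ) * p.eval (x - e) = 0 := by
  induction N with
  | zero => intro p hp; omega
  | succ N ih =>
    intro p hp x
    have hb := binom_shift N (fun e => p.eval (x - (e:ℕ)))
    rw [hb]
    set c := p.comp (Polynomial.X - Polynomial.C 1) with hcdef
    set q := p - c with hqdef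
    have hev : ∀ e ∈ range (N+1),
        (-1:ℤ)^e * (N.choose e : ℤ) * (p.eval (x - (e:ℕ)) - p.eval (x - ((e+1:ℕ):ℤ)))
        = (-1:ℤ)^e * (N.choose e : ℤ) * q.eval (x - (e:ℕ)) := by
      intro e _
      congr 1
      rw [hqdef, hcdef]
      simp only [eval_sub, eval_comp, eval_X, eval_one, eval_C]
      push_cast
      ring_nf
    rw [sum_congr rfl hev]
    by_cases hq0 : q = 0
    · simp [hq0]
    · have hp0 : p ≠ 0 := by
        intro h; apply hq0; rw [hqdef, hcdef, h]; simp
      have hmon : (Polynomial.X - Polynomial.C (1:ℤ)).Monic := monic_X_sub_C 1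
      have hdc : c.natDegree = p.natDegree := by
        rw [hcdef, Polynomial.natDegree_comp, Polynomial.natDegree_X_sub_C, mul_one]
      have hlc : c.leadingCoeff = p.leadingCoeff := by
        rw [hcdef, Polynomial.leadingCoeff_comp (by rw [Polynomial.natDegree_X_sub_C]; omega)]
        rw [hmon.leadingCoeff, one_pow, mul_one]
      have hc0 : c ≠ 0 := by
        intro h
        apply hp0
        rw [← Polynomial.leadingCoeff_eq_zero, ← hlc, h, Polynomial.leadingCoeff_zero]
      have hdeg : p.degree = c.degree := by
        rw [Polynomial.degree_eq_natDegree hp0, Polynomial.degree_eq_natDegree hc0, hdc]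
      have hlt : q.degree < p.degree := Polynomial.degree_sub_lt hdeg hp0 hlc.symm
      have hnat : q.natDegree < p.natDegree := Polynomial.natDegree_lt_natDegree hq0 hlt
      exact ih q (by omega) x

lemma prod_ascZ (A : ℕ) (r : ℕ) :
    ∏ i ∈ range A, ((r:ℤ) + 1 + i) = (A.factorial : ℤ) * ((A+r).choose r : ℤ) := by
  induction A with
  | zero => simp
  | succ A ih =>
    rw [prod_range_succ, ih]
    have h := succ_mul_chooseZ' A r
    have hf : ((A+1).factorial : ℤ) = ((A:ℤ)+1) * (A.factorial : ℤ) := by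
      rw [Nat.factorial_succ]; push_cast; ring
    rw [show A+1+r = A+1+r from rfl, hf]
    linear_combination (-(A.factorial : ℤ)) * h

lemma Tzero (A m : ℕ) (b : ℕ → ℤ) :
    ∑ r ∈ range (m+2), (-1:ℤ)^(m+1-r) * ((A+r).choose r : ℤ) *
      ((A+m+1).choose (m+1-r) : ℤ) * (∏ i ∈ range m, ((r:ℤ) + b i)) = 0 := by
  set p : Polynomial ℤ := (∏ i ∈ range A, (Polynomial.X + Polynomial.C ((i:ℤ)+1))) *
      ∏ i ∈ range m, (Polynomial.X + Polynomial.C (b i)) with hp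
  have hmon1 : (∏ i ∈ range A, (Polynomial.X + Polynomial.C ((i:ℤ)+1))).Monic :=
    monic_prod_of_monic _ _ (fun i _ => monic_X_add_C _)
  have hmon2 : (∏ i ∈ range m, (Polynomial.X + Polynomial.C (b i))).Monic :=
    monic_prod_of_monic _ _ (fun i _ => monic_X_add_C _)
  have hdeg : p.natDegree = A + m := by
    rw [hp, hmon1.natDegree_mul hmon2,
      Polynomial.natDegree_prod_of_monic _ _ (fun i _ => monic_X_add_C _),
      Polynomial.natDegree_prod_of_monic _ _ (fun i _ => monic_X_add_C _),
      ]
    simp only [Polynomial.natDegree_X_add_C, Finset.sum_const, card_range, smul_eq_mul,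
      mul_one]
  have heval : ∀ r : ℕ, p.eval (r:ℤ)
      = (A.factorial : ℤ) * ((A+r).choose r : ℤ) * (∏ i ∈ range m, ((r:ℤ) + b i)) := by
    intro r
    rw [hp, eval_mul, eval_prod, eval_prod]
    simp only [eval_add, eval_X, eval_C]
    rw [show (∏ i ∈ range A, ((r:ℤ) + ((i:ℤ)+1))) = ∏ i ∈ range A, ((r:ℤ) + 1 + i) from
      prod_congr rfl (fun i _ => by ring), prod_ascZ]
  have hfd := findiff (A+m+1) p (by omega) ((m+1 : ℕ) : ℤ)
  -- restrict the sum to range (m+2)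
  have hzero : ∀ e ∈ range (A+m+2), e ∉ range (m+2) →
      (-1:ℤ)^e * ((A+m+1).choose e : ℤ) * p.eval (((m+1:ℕ):ℤ) - e) = 0 := by
    intro e he hne
    rw [mem_range] at he
    rw [mem_range, not_lt] at hne
    have hz : p.eval (((m+1:ℕ):ℤ) - e) = 0 := by
      rw [hp, eval_mul, eval_prod]
      have hiA : e - m - 2 ∈ range A := by rw [mem_range]; omega
      rw [Finset.prod_eq_zero hiA]
      · ring
      · simp only [eval_add, eval_X, eval_C]
        omega
    rw [hz]; ring
  rw [show A+m+1+1 = A+m+2 by ring] at hfd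
  rw [← Finset.sum_subset (by rw [Finset.range_subset_range]; omega) hzero] at hfd
  have hrefl := Finset.sum_range_reflect
    (fun r => (A.factorial:ℤ) * ((-1:ℤ)^(m+1-r) * ((A+r).choose r : ℤ) *
      ((A+m+1).choose (m+1-r) : ℤ) * (∏ i ∈ range m, ((r:ℤ) + b i)))) (m+2)
  have hterm : ∀ e ∈ range (m+2),
      (A.factorial:ℤ) * ((-1:ℤ)^(m+1-(m+2-1-e)) * ((A+(m+2-1-e)).choose (m+2-1-e) : ℤ) *
        ((A+m+1).choose (m+1-(m+2-1-e)) : ℤ) * (∏ i ∈ range m, (((m+2-1-e : ℕ):ℤ) + b i)))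
      = (-1:ℤ)^e * ((A+m+1).choose e : ℤ) * p.eval (((m+1:ℕ):ℤ) - e) := by
    intro e he
    rw [mem_range] at he
    have h1 : m+2-1-e = m+1-e := by omega
    have h2 : m+1-(m+1-e) = e := by omega
    have h3 : (((m+1-e : ℕ)) : ℤ) = ((m+1:ℕ):ℤ) - e := by omega
    rw [h1, h2, ← h3, heval (m+1-e)]
    ring
  have hcancel : (A.factorial : ℤ) ≠ 0 := by exact_mod_cast A.factorial_ne_zero
  have key : (A.factorial : ℤ) * (∑ r ∈ range (m+2), (-1:ℤ)^(m+1-r) * ((A+r).choose r : ℤ) *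
      ((A+m+1).choose (m+1-r) : ℤ) * (∏ i ∈ range m, ((r:ℤ) + b i))) = 0 := by
    rw [Finset.mul_sum, ← hrefl, sum_congr rfl hterm]
    exact hfd
  rcases mul_eq_zero.mp key with h | h
  · exact absurd h hcancel
  · exact h

noncomputable def Dnat (Y : Set ℕ) (n : ℕ) (u : ℕ → ℕ) : ℕ :=
  ((range n).filter (fun t => t+1 < n ∧ u (t+1) < u t ∧ u (t+1) ∈ Y)).card

lemma Dnat_congr (Y : Set ℕ) (n : ℕ) (u u' : ℕ → ℕ) (h : ∀ t < n, u t = u' t) :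
    Dnat Y n u = Dnat Y n u' := by
  unfold Dnat
  congr 1
  apply filter_congr
  intro t ht
  rw [mem_range] at ht
  constructor
  · rintro ⟨h1, h2, h3⟩
    rw [h t ht, h (t+1) (by omega)] at *
    exact ⟨h1, h2, h3⟩
  · rintro ⟨h1, h2, h3⟩
    rw [← h t ht, ← h (t+1) (by omega)] at *
    exact ⟨h1, h2, h3⟩

lemma desXY_eq_Dnat (Y : Set ℕ) {n : ℕ} (w : Fin n → ℕ) :
    desXY Set.univ Y w = Dnat Y n (fun t => if h : t < n then w ⟨t, h⟩ else 0) := by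
  unfold desXY Dnat
  apply Finset.card_bij (fun (i : Fin n) _ => i.1)
  · intro a ha
    simp only [mem_filter, mem_univ, true_and] at ha
    obtain ⟨h, h1, _, h2⟩ := ha
    simp only [mem_filter, mem_range]
    refine ⟨a.2, h, ?_, ?_⟩
    · rw [dif_pos h, dif_pos a.2]; exact h1
    · rw [dif_pos h]; exact h2
  · intro a _ b _ hab
    exact Fin.ext hab
  · intro t ht
    simp only [mem_filter, mem_range] at ht
    obtain ⟨htn, h1, h2, h3⟩ := ht
    refine ⟨⟨t, htn⟩, ?_, rfl⟩
    simp only [mem_filter, mem_univ, true_and]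
    rw [dif_pos h1] at h2 h3
    rw [dif_pos htn] at h2
    exact ⟨h1, h2, Set.mem_univ _, h3⟩

lemma Dnat_insert (Y : Set ℕ) (n p : ℕ) (hp : p ≤ n) (v : ℕ → ℕ)
    (hv : ∀ t, t < n → v t ≤ n) :
    Dnat Y (n+1) (fun t => if t < p then v t else if t = p then n+1 else v (t-1))
      + (if 1 ≤ p ∧ p < n ∧ v p < v (p-1) ∧ v p ∈ Y then 1 else 0)
    = Dnat Y n v + (if p < n ∧ v p ∈ Y then 1 else 0) := by
  classical
  set W : ℕ → ℕ := fun t => if t < p then v t else if t = p then n+1 else v (t-1) with hW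
  have hWlt : ∀ t, t < p → W t = v t := by intro t ht; simp [hW, ht]
  have hWp : W p = n+1 := by simp [hW]
  have hWgt : ∀ t, p < t → W t = v (t-1) := by
    intro t ht; simp only [hW]; rw [if_neg (by omega), if_neg (by omega)]
  -- express Dnat as indicator sums
  have hsum : ∀ (m : ℕ) (u : ℕ → ℕ), Dnat Y m u
      = ∑ t ∈ range m, (if t+1 < m ∧ u (t+1) < u t ∧ u (t+1) ∈ Y then 1 else 0) := by
    intro m u; unfold Dnat; rw [Finset.card_filter]
  rw [hsum, hsum]
  set χW : ℕ → ℕ := fun t => if t+1 < n+1 ∧ W (t+1) < W t ∧ W (t+1) ∈ Y then 1 else 0 with hχW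
  set χv : ℕ → ℕ := fun t => if t+1 < n ∧ v (t+1) < v t ∧ v (t+1) ∈ Y then 1 else 0 with hχv
  -- sum over range (n+1) splits at p
  have hsplitW : ∑ t ∈ range (n+1), χW t
      = (∑ t ∈ range p, χW t) + χW p + ∑ t ∈ Ico (p+1) (n+1), χW t := by
    rw [Finset.range_eq_Ico, ← Finset.sum_Ico_consecutive _ (Nat.zero_le p) (by omega : p ≤ n+1),
      Finset.sum_eq_sum_Ico_succ_bot (by omega : p < n+1), ← Finset.range_eq_Ico]
    ring
  have htail : ∑ t ∈ Ico (p+1) (n+1), χW t = ∑ t ∈ Ico p n, χv t := by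
    rw [Finset.sum_Ico_eq_sum_range, Finset.sum_Ico_eq_sum_range]
    have he : n + 1 - (p+1) = n - p := by omega
    rw [he]
    apply sum_congr rfl
    intro i hi
    rw [mem_range] at hi
    have h1 : W (p+1+i) = v (p+i) := by
      have := hWgt (p+1+i) (by omega)
      rwa [show p+1+i-1 = p+i from by omega] at this
    have h2 : W (p+1+i+1) = v (p+i+1) := by
      have := hWgt (p+1+i+1) (by omega)
      rwa [show p+1+i+1-1 = p+i+1 from by omega] at this
    simp only [hχW, hχv]
    rw [h1, h2]
    refine if_congr ?_ rfl rfl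
    constructor <;> (rintro ⟨a, b, c⟩; refine ⟨by omega, b, c⟩)
  have hχWp : χW p = (if p < n ∧ v p ∈ Y then 1 else 0) := by
    by_cases hpn : p < n
    · have h1 : W (p+1) = v p := by
        have := hWgt (p+1) (by omega)
        rwa [show p+1-1 = p from by omega] at this
      simp only [hχW, h1, hWp]
      refine if_congr ⟨?_, ?_⟩ rfl rfl
      · rintro ⟨a, b, c⟩; exact ⟨hpn, c⟩
      · rintro ⟨a, c⟩
        refine ⟨by omega, ?_, c⟩
        have := hv p hpn
        omega
    · simp only [hχW]
      rw [if_neg (by rintro ⟨a, b, c⟩; omega), if_neg (by rintro ⟨a, b⟩; exact hpn a)]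
  rcases Nat.eq_zero_or_pos p with hp0 | hp1
  · subst hp0
    have hB0 : (if 1 ≤ 0 ∧ 0 < n ∧ v 0 < v (0-1) ∧ v 0 ∈ Y then 1 else 0) = 0 := by
      rw [if_neg]; rintro ⟨a, b⟩; omega
    rw [hsplitW, htail, hχWp, hB0]
    have h0 : ∑ t ∈ range 0, χW t = 0 := by simp
    have h1 : ∑ t ∈ Ico 0 n, χv t = ∑ t ∈ range n, χv t := by rw [Finset.range_eq_Ico]
    rw [h0, h1]
    ring
  · -- p ≥ 1
    have hhead : ∑ t ∈ range p, χW t = (∑ t ∈ range (p-1), χv t) + χW (p-1) := by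
      have hpp : p = (p-1) + 1 := by omega
      rw [hpp, Finset.sum_range_succ, ← hpp]
      congr 1
      apply sum_congr rfl
      intro t ht
      rw [mem_range] at ht
      have h1 : W t = v t := hWlt t (by omega)
      have h2 : W (t+1) = v (t+1) := hWlt (t+1) (by omega)
      simp only [hχW, hχv]
      rw [h1, h2]
      refine if_congr ?_ rfl rfl
      constructor
      · rintro ⟨a, b, c⟩; exact ⟨by omega, b, c⟩
      · rintro ⟨a, b, c⟩; exact ⟨by omega, b, c⟩
    have hbrk : χW (p-1) = 0 := by
      simp only [hχW]
      rw [if_neg]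
      rintro ⟨a, b, c⟩
      rw [show p-1+1 = p by omega, hWp, hWlt (p-1) (by omega)] at b
      have := hv (p-1) (by omega)
      omega
    have hB : (if 1 ≤ p ∧ p < n ∧ v p < v (p-1) ∧ v p ∈ Y then 1 else 0) = χv (p-1) := by
      simp only [hχv]
      rw [show p-1+1 = p by omega]
      refine if_congr ?_ rfl rfl
      constructor
      · rintro ⟨a, b, c, d⟩; exact ⟨b, c, d⟩
      · rintro ⟨b, c, d⟩; exact ⟨hp1, b, c, d⟩
    have hvsplit : ∑ t ∈ range n, χv t
        = (∑ t ∈ range (p-1), χv t) + χv (p-1) + ∑ t ∈ Ico p n, χv t := by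
      rw [Finset.range_eq_Ico,
        ← Finset.sum_Ico_consecutive _ (Nat.zero_le (p-1)) (by omega : p-1 ≤ n),
        Finset.sum_eq_sum_Ico_succ_bot (by omega : p-1 < n), ← Finset.range_eq_Ico,
        show p-1+1 = p by omega]
      ring
    rw [hsplitW, htail, hhead, hbrk, hχWp, hB, hvsplit]
    ring

noncomputable def wordOf {n : ℕ} (σ : Equiv.Perm (Fin n)) : ℕ → ℕ :=
  fun t => if h : t < n then (σ ⟨t, h⟩ : ℕ) + 1 else 0

lemma permCount_eq_Dnat (Y : Set ℕ) (n s : ℕ) :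
    permCount Set.univ Y n s
      = (Finset.univ.filter (fun σ : Equiv.Perm (Fin n) => Dnat Y n (wordOf σ) = s)).card := by
  unfold permCount
  congr 1
  apply filter_congr
  intro σ _
  rw [desXY_eq_Dnat Y (fun i => (σ i : ℕ) + 1)]
  rfl

noncomputable def insE {n : ℕ} (p : Fin (n+1)) (π : Equiv.Perm (Fin n)) :
    Equiv.Perm (Fin (n+1)) :=
  (finSuccEquiv' p).trans ((Equiv.optionCongr π).trans (finSuccEquiv' (Fin.last n)).symm)

lemma insE_self {n : ℕ} (p : Fin (n+1)) (π : Equiv.Perm (Fin n)) :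
    insE p π p = Fin.last n := by
  simp [insE, finSuccEquiv'_at, finSuccEquiv'_symm_none]

lemma insE_succAbove {n : ℕ} (p : Fin (n+1)) (π : Equiv.Perm (Fin n)) (i : Fin n) :
    insE p π (p.succAbove i) = (π i).castSucc := by
  simp [insE, finSuccEquiv'_succAbove, finSuccEquiv'_symm_some, Fin.succAbove_last]

lemma wordOf_insE {n : ℕ} (p : Fin (n+1)) (π : Equiv.Perm (Fin n)) :
    ∀ t < n+1, wordOf (insE p π) t
      = if t < p.1 then wordOf π t else if t = p.1 then n+1 else wordOf π (t-1) := by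
  intro t ht
  rcases lt_trichotomy t p.1 with h | h | h
  · rw [if_pos h]
    have htn : t < n := by omega
    have hsa : p.succAbove ⟨t, htn⟩ = ⟨t, ht⟩ := by
      rw [Fin.succAbove_of_castSucc_lt]
      · rfl
      · exact h
    unfold wordOf
    rw [dif_pos ht, dif_pos htn, ← hsa, insE_succAbove]
    rfl
  · rw [if_neg (by omega), if_pos h]
    have hpe : (⟨t, ht⟩ : Fin (n+1)) = p := Fin.ext h
    unfold wordOf
    rw [dif_pos ht, hpe, insE_self]
    rfl
  · rw [if_neg (by omega), if_neg (by omega)]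
    have ht1 : t - 1 < n := by omega
    have hsa : p.succAbove ⟨t-1, ht1⟩ = ⟨t, ht⟩ := by
      rw [Fin.succAbove_of_le_castSucc]
      · apply Fin.ext; simp [Fin.val_succ]; omega
      · rw [Fin.le_castSucc_iff]
        apply Fin.lt_def.mpr
        simp only [Fin.val_succ]
        omega
    unfold wordOf
    rw [dif_pos ht, dif_pos ht1, ← hsa, insE_succAbove]
    rfl

lemma des_insE (Y : Set ℕ) {n : ℕ} (p : Fin (n+1)) (π : Equiv.Perm (Fin n)) :
    Dnat Y (n+1) (wordOf (insE p π))
      + (if 1 ≤ p.1 ∧ p.1 < n ∧ wordOf π p.1 < wordOf π (p.1-1) ∧ wordOf π p.1 ∈ Y then 1 else 0)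
    = Dnat Y n (wordOf π)
      + (if p.1 < n ∧ wordOf π p.1 ∈ Y then 1 else 0) := by
  rw [Dnat_congr Y (n+1) (wordOf (insE p π))
    (fun t => if t < p.1 then wordOf π t else if t = p.1 then n+1 else wordOf π (t-1))
    (wordOf_insE p π)]
  exact Dnat_insert Y n p.1 (by omega) (wordOf π)
    (fun t ht => by unfold wordOf; rw [dif_pos ht]; have := (π ⟨t, ht⟩).2; omega)

lemma insE_bij {n : ℕ} :
    Function.Bijective (fun q : Fin (n+1) × Equiv.Perm (Fin n) => insE q.1 q.2) := by
  rw [Fintype.bijective_iff_injective_and_card]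
  constructor
  · rintro ⟨p, π⟩ ⟨q, ρ⟩ h
    simp only at h
    have hpq : p = q := by
      have h1 : insE q ρ p = Fin.last n := by rw [← h]; exact insE_self p π
      have h2 : insE q ρ q = Fin.last n := insE_self q ρ
      exact (Equiv.injective (insE q ρ)) (h1.trans h2.symm)
    subst hpq
    have hπρ : π = ρ := by
      apply Equiv.ext
      intro i
      have h1 : insE p π (p.succAbove i) = insE p ρ (p.succAbove i) := by rw [h]
      rw [insE_succAbove, insE_succAbove] at h1
      exact Fin.castSucc_injective n h1
    rw [hπρ]
  · simp [Fintype.card_perm, Nat.factorial_succ]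

lemma card_filter_comp_bij {α β : Type*} [Fintype α] [Fintype β] (e : α → β)
    (he : Function.Bijective e) (P : β → Prop) [DecidablePred P] :
    (Finset.univ.filter P).card = (Finset.univ.filter (fun a => P (e a))).card := by
  apply Finset.card_bij (fun b _ => (Equiv.ofBijective e he).symm b)
  · intro b hb
    simp only [mem_filter, mem_univ, true_and] at hb ⊢
    have : e ((Equiv.ofBijective e he).symm b) = b :=
      (Equiv.ofBijective e he).apply_symm_apply b
    rw [this]
    exact hb
  · intro a _ b _ hab
    exact (Equiv.ofBijective e he).symm.injective hab
  · intro a ha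
    simp only [mem_filter, mem_univ, true_and] at ha
    refine ⟨e a, ?_, ?_⟩
    · simp only [mem_filter, mem_univ, true_and]
      exact ha
    · exact (Equiv.ofBijective e he).symm_apply_apply a

-- counting lemmas for a fixed permutation word
lemma count_Nw (Y : Set ℕ) {n : ℕ} (π : Equiv.Perm (Fin n)) :
    ((range (n+1)).filter (fun t => t < n ∧ wordOf π t ∈ Y)).card
      = ((Icc 1 n).filter (fun x => x ∈ Y)).card := by
  apply Finset.card_bij (fun t _ => wordOf π t)
  · intro t ht
    simp only [mem_filter, mem_range] at ht
    obtain ⟨_, htn, hY⟩ := ht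
    simp only [mem_filter, mem_Icc]
    have hb : wordOf π t = (π ⟨t, htn⟩ : ℕ) + 1 := by unfold wordOf; rw [dif_pos htn]
    refine ⟨⟨by omega, ?_⟩, hY⟩
    have := (π ⟨t, htn⟩).2
    omega
  · intro a ha b hb hab
    simp only [mem_filter, mem_range] at ha hb
    obtain ⟨_, han, _⟩ := ha
    obtain ⟨_, hbn, _⟩ := hb
    unfold wordOf at hab
    rw [dif_pos han, dif_pos hbn] at hab
    have : π ⟨a, han⟩ = π ⟨b, hbn⟩ := by
      apply Fin.ext; omega
    have := π.injective this
    simpa [Fin.ext_iff] using this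
  · intro x hx
    simp only [mem_filter, mem_Icc] at hx
    obtain ⟨⟨hx1, hxn⟩, hY⟩ := hx
    have hxn' : x - 1 < n := by omega
    refine ⟨(π.symm ⟨x-1, hxn'⟩ : ℕ), ?_, ?_⟩
    · simp only [mem_filter, mem_range]
      have h2 := (π.symm ⟨x-1, hxn'⟩).2
      have hw : wordOf π (π.symm ⟨x-1, hxn'⟩ : ℕ) = x := by
        unfold wordOf
        rw [dif_pos h2]
        have : (⟨(π.symm ⟨x-1, hxn'⟩ : ℕ), h2⟩ : Fin n) = π.symm ⟨x-1, hxn'⟩ := by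
          apply Fin.ext; rfl
        rw [this, Equiv.apply_symm_apply]
        simp; omega
      rw [hw]
      exact ⟨by omega, h2, hY⟩
    · have h2 := (π.symm ⟨x-1, hxn'⟩).2
      unfold wordOf
      rw [dif_pos h2]
      have : (⟨(π.symm ⟨x-1, hxn'⟩ : ℕ), h2⟩ : Fin n) = π.symm ⟨x-1, hxn'⟩ := by
        apply Fin.ext; rfl
      rw [this, Equiv.apply_symm_apply]
      simp; omega

lemma count_B (Y : Set ℕ) {n : ℕ} (v : ℕ → ℕ) :
    ((range (n+1)).filter (fun t => 1 ≤ t ∧ t < n ∧ v t < v (t-1) ∧ v t ∈ Y)).card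
      = Dnat Y n v := by
  unfold Dnat
  apply Finset.card_bij (fun t _ => t - 1)
  · intro t ht
    simp only [mem_filter, mem_range] at ht ⊢
    obtain ⟨_, h1, h2, h3, h4⟩ := ht
    rw [show t-1+1 = t from by omega]
    exact ⟨by omega, h2, h3, h4⟩
  · intro a ha b hb hab
    simp only [mem_filter, mem_range] at ha hb
    omega
  · intro t ht
    simp only [mem_filter, mem_range] at ht ⊢
    obtain ⟨_, h1, h2, h3⟩ := ht
    refine ⟨t+1, ?_, by omega⟩
    refine ⟨by omega, by omega, by omega, ?_, h3⟩
    rw [show t+1-1 = t from by omega]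
    exact h2

lemma Bset_subset_Nwset (Y : Set ℕ) (n : ℕ) (v : ℕ → ℕ) :
    ((range (n+1)).filter (fun t => 1 ≤ t ∧ t < n ∧ v t < v (t-1) ∧ v t ∈ Y))
      ⊆ ((range (n+1)).filter (fun t => t < n ∧ v t ∈ Y)) := by
  intro t ht
  simp only [mem_filter] at ht ⊢
  exact ⟨ht.1, ht.2.2.1, ht.2.2.2.2⟩

lemma dnat_le_K (Y : Set ℕ) {n : ℕ} (π : Equiv.Perm (Fin n)) :
    Dnat Y n (wordOf π) ≤ ((Icc 1 n).filter (fun x => x ∈ Y)).card := by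
  rw [← count_B Y (wordOf π), ← count_Nw Y π]
  exact Finset.card_le_card (Bset_subset_Nwset Y n (wordOf π))

lemma inner_count (Y : Set ℕ) {n : ℕ} (π : Equiv.Perm (Fin n)) (s : ℕ) :
    ((Finset.univ : Finset (Fin (n+1))).filter
        (fun p => Dnat Y (n+1) (wordOf (insE p π)) = s)).card
    = (if Dnat Y n (wordOf π) = s
        then (n+1) - (((Icc 1 n).filter (fun x => x ∈ Y)).card - Dnat Y n (wordOf π))
       else if Dnat Y n (wordOf π) + 1 = s
        then ((Icc 1 n).filter (fun x => x ∈ Y)).card - Dnat Y n (wordOf π)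
       else 0) := by
  classical
  set v := wordOf π with hv
  set d := Dnat Y n v with hd
  set K := ((Icc 1 n).filter (fun x => x ∈ Y)).card with hK
  set Nwset := ((range (n+1)).filter (fun t => t < n ∧ v t ∈ Y)) with hNwset
  set Bset := ((range (n+1)).filter (fun t => 1 ≤ t ∧ t < n ∧ v t < v (t-1) ∧ v t ∈ Y))
    with hBset
  have hsub : Bset ⊆ Nwset := Bset_subset_Nwset Y n v
  have hcNw : Nwset.card = K := count_Nw Y π
  have hcB : Bset.card = d := count_B Y v
  have hdK : d ≤ K := by rw [← hcNw, ← hcB]; exact Finset.card_le_card hsub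
  have hbij : ((Finset.univ : Finset (Fin (n+1))).filter
        (fun p => Dnat Y (n+1) (wordOf (insE p π)) = s)).card
      = ((range (n+1)).filter (fun t =>
          d + (if t < n ∧ v t ∈ Y then 1 else 0)
            = s + (if 1 ≤ t ∧ t < n ∧ v t < v (t-1) ∧ v t ∈ Y then 1 else 0))).card := by
    apply Finset.card_bij (fun p _ => p.1)
    · intro p hp
      simp only [mem_filter, mem_univ, true_and] at hp
      simp only [mem_filter, mem_range]
      refine ⟨p.2, ?_⟩
      have heq := des_insE Y p π
      rw [hp, ← hv, ← hd] at heq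
      omega
    · intro a _ b _ hab
      exact Fin.ext hab
    · intro t ht
      simp only [mem_filter, mem_range] at ht
      obtain ⟨htn, hQ⟩ := ht
      refine ⟨⟨t, htn⟩, ?_, rfl⟩
      simp only [mem_filter, mem_univ, true_and]
      have heq := des_insE Y (⟨t, htn⟩ : Fin (n+1)) π
      rw [← hv, ← hd] at heq
      simp only [Fin.val_mk] at heq
      omega
  rw [hbij]
  by_cases hds : d = s
  · rw [if_pos hds]
    have hset : ((range (n+1)).filter (fun t =>
          d + (if t < n ∧ v t ∈ Y then 1 else 0)
            = s + (if 1 ≤ t ∧ t < n ∧ v t < v (t-1) ∧ v t ∈ Y then 1 else 0)))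
        = range (n+1) \ (Nwset \ Bset) := by
      ext t
      simp only [mem_filter, mem_sdiff, mem_range, hNwset, hBset]
      by_cases hB : 1 ≤ t ∧ t < n ∧ v t < v (t-1) ∧ v t ∈ Y
      · have hN : t < n ∧ v t ∈ Y := ⟨hB.2.1, hB.2.2.2⟩
        simp [hN, hB] <;> omega
      · by_cases hN : t < n ∧ v t ∈ Y
        · have hB' : ¬(1 ≤ t ∧ v t < v (t-1)) := fun h => hB ⟨h.1, hN.1, h.2, hN.2⟩
          simp [hN, hB'] <;> omega
        · simp [hN, hB] <;> omega
    rw [hset,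
      Finset.card_sdiff_of_subset (Finset.sdiff_subset.trans (by rw [hNwset]; exact filter_subset _ _)),
      Finset.card_sdiff_of_subset hsub, hcNw, hcB, Finset.card_range, hds]
  · rw [if_neg hds]
    by_cases hds1 : d + 1 = s
    · rw [if_pos hds1]
      have hset : ((range (n+1)).filter (fun t =>
            d + (if t < n ∧ v t ∈ Y then 1 else 0)
              = s + (if 1 ≤ t ∧ t < n ∧ v t < v (t-1) ∧ v t ∈ Y then 1 else 0)))
          = Nwset \ Bset := by
        ext t
        simp only [mem_filter, mem_sdiff, mem_range, hNwset, hBset]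
        by_cases hB : 1 ≤ t ∧ t < n ∧ v t < v (t-1) ∧ v t ∈ Y
        · have hN : t < n ∧ v t ∈ Y := ⟨hB.2.1, hB.2.2.2⟩
          simp [hN, hB] <;> omega
        · by_cases hN : t < n ∧ v t ∈ Y
          · have hB' : ¬(1 ≤ t ∧ v t < v (t-1)) := fun h => hB ⟨h.1, hN.1, h.2, hN.2⟩
            simp [hN, hB'] <;> omega
          · simp [hN, hB] <;> omega
      rw [hset, Finset.card_sdiff_of_subset hsub, hcNw, hcB]
    · rw [if_neg hds1]
      rw [Finset.card_eq_zero, Finset.filter_eq_empty_iff]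
      intro t _
      by_cases hB : 1 ≤ t ∧ t < n ∧ v t < v (t-1) ∧ v t ∈ Y
      · have hN : t < n ∧ v t ∈ Y := ⟨hB.2.1, hB.2.2.2⟩
        simp [hN, hB] <;> omega
      · by_cases hN : t < n ∧ v t ∈ Y
        · have hB' : ¬(1 ≤ t ∧ v t < v (t-1)) := fun h => hB ⟨h.1, hN.1, h.2, hN.2⟩
          simp [hN, hB'] <;> omega
        · simp [hN, hB] <;> omega

lemma permVanish (Y : Set ℕ) (n s : ℕ)
    (h : ((Icc 1 n).filter (fun x => x ∈ Y)).card < s) :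
    permCount Set.univ Y n s = 0 := by
  rw [permCount_eq_Dnat, Finset.card_eq_zero, Finset.filter_eq_empty_iff]
  intro π _
  have := dnat_le_K Y π
  omega

lemma sum_ite_count {n : ℕ} (P : Equiv.Perm (Fin n) → Prop) [DecidablePred P] (c : ℕ) :
    (∑ π : Equiv.Perm (Fin n), if P π then c else 0)
      = c * (Finset.univ.filter P).card := by
  classical
  rw [Finset.card_filter, Finset.mul_sum]
  apply Finset.sum_congr rfl
  intro π _
  by_cases h : P π <;> simp [h]

lemma permRec (Y : Set ℕ) (n s : ℕ) :
    permCount Set.univ Y (n+1) s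
      = ((n+1) - (((Icc 1 n).filter (fun x => x ∈ Y)).card - s)) * permCount Set.univ Y n s
        + (((Icc 1 n).filter (fun x => x ∈ Y)).card - (s-1))
            * (if s = 0 then 0 else permCount Set.univ Y n (s-1)) := by
  classical
  set K := ((Icc 1 n).filter (fun x => x ∈ Y)).card with hK
  rw [permCount_eq_Dnat,
    card_filter_comp_bij (fun q : Fin (n+1) × Equiv.Perm (Fin n) => insE q.1 q.2) insE_bij,
    Finset.card_filter, ← Finset.univ_product_univ, Finset.sum_product_right]
  have hin : ∀ π : Equiv.Perm (Fin n),
      (∑ p : Fin (n+1), if Dnat Y (n+1) (wordOf (insE p π)) = s then 1 else 0)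
      = (if Dnat Y n (wordOf π) = s then (n+1) - (K - s) else 0)
        + (if Dnat Y n (wordOf π) + 1 = s then K - (s-1) else 0) := by
    intro π
    rw [← Finset.card_filter, inner_count Y π s]
    by_cases h1 : Dnat Y n (wordOf π) = s
    · rw [if_pos h1, if_pos h1, if_neg (by omega), h1, add_zero]
    · rw [if_neg h1, if_neg h1, zero_add]
      by_cases h2 : Dnat Y n (wordOf π) + 1 = s
      · rw [if_pos h2, if_pos h2]
        congr 1
        omega
      · rw [if_neg h2, if_neg h2]
  rw [Finset.sum_congr rfl (fun π _ => hin π), Finset.sum_add_distrib]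
  congr 1
  · rw [sum_ite_count, permCount_eq_Dnat]
  · rcases Nat.eq_zero_or_pos s with hs0 | hs1
    · subst hs0
      rw [if_pos rfl, mul_zero]
      apply Finset.sum_eq_zero
      intro π _
      rw [if_neg (by omega)]
    · rw [if_neg (by omega)]
      have hiff : ∀ π : Equiv.Perm (Fin n),
          (if Dnat Y n (wordOf π) + 1 = s then K - (s-1) else 0)
          = (if Dnat Y n (wordOf π) = s - 1 then K - (s-1) else 0) := by
        intro π
        refine if_congr ?_ rfl rfl
        omega
      rw [Finset.sum_congr rfl (fun π _ => hiff π), sum_ite_count, permCount_eq_Dnat]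

lemma Kval (k : ℕ) (hk : 1 ≤ k) (n : ℕ) :
    ((Icc 1 n).filter (fun x => x ∈ {x : ℕ | ∃ i, 1 ≤ i ∧ x = k * i})).card = n / k := by
  have hb : ((Icc 1 n).filter (fun x => x ∈ {x : ℕ | ∃ i, 1 ≤ i ∧ x = k * i})).card
      = (Icc 1 (n/k)).card := by
    apply Finset.card_bij (fun x _ => x / k)
    · intro x hx
      simp only [mem_filter, mem_Icc, Set.mem_setOf_eq] at hx
      obtain ⟨⟨hx1, hxn⟩, i, hi1, rfl⟩ := hx
      simp only [mem_Icc]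
      rw [Nat.mul_div_cancel_left i (by omega)]
      refine ⟨hi1, ?_⟩
      rw [Nat.le_div_iff_mul_le (show 0 < k by omega)]
      calc i * k = k * i := mul_comm i k
      _ ≤ n := hxn
    · intro a ha b hb hab
      simp only [mem_filter, mem_Icc, Set.mem_setOf_eq] at ha hb
      obtain ⟨_, i, hi1, rfl⟩ := ha
      obtain ⟨_, i', hi1', rfl⟩ := hb
      rw [Nat.mul_div_cancel_left i (by omega), Nat.mul_div_cancel_left i' (by omega)] at hab
      rw [hab]
    · intro i hi
      simp only [mem_Icc] at hi
      refine ⟨k * i, ?_, ?_⟩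
      · simp only [mem_filter, mem_Icc, Set.mem_setOf_eq]
        have hle : k * i ≤ n := by
          calc k * i ≤ k * (n / k) := Nat.mul_le_mul_left k hi.2
          _ ≤ n := by rw [mul_comm]; exact Nat.div_mul_le_self n k
        have h1 : 1 ≤ k * i := le_trans (by norm_num) (Nat.mul_le_mul hk hi.1)
        exact ⟨⟨h1, hle⟩, i, hi.1, rfl⟩
      · rw [Nat.mul_div_cancel_left i (by omega)]
  rw [hb]
  simp [Nat.card_Icc]

lemma K_le (Y : Set ℕ) (n : ℕ) : ((Icc 1 n).filter (fun x => x ∈ Y)).card ≤ n := by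
  calc ((Icc 1 n).filter (fun x => x ∈ Y)).card ≤ (Icc 1 n).card :=
        Finset.card_le_card (filter_subset _ _)
  _ = n := by rw [Nat.card_Icc]; omega

lemma QZrec (Y : Set ℕ) (n s : ℕ) :
    (permCount Set.univ Y (n+1) s : ℤ)
      = ((n:ℤ) + 1 - (((Icc 1 n).filter (fun x => x ∈ Y)).card : ℤ) + s)
          * (permCount Set.univ Y n s : ℤ)
        + ((((Icc 1 n).filter (fun x => x ∈ Y)).card : ℤ) + 1 - s)
          * (if s = 0 then 0 else (permCount Set.univ Y n (s-1) : ℤ)) := by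
  classical
  set K := ((Icc 1 n).filter (fun x => x ∈ Y)).card with hK
  have hKn : K ≤ n := K_le Y n
  have hrec := permRec Y n s
  rw [← hK] at hrec
  by_cases hsK : s ≤ K
  · have c1 : ((n + 1 - (K - s) : ℕ) : ℤ) = (n:ℤ) + 1 - K + s := by omega
    have hz := congrArg (Nat.cast (R := ℤ)) hrec
    push_cast at hz
    rcases Nat.eq_zero_or_pos s with hs0 | hs1
    · subst hs0
      simp only [if_pos rfl] at hz ⊢
      rw [hz, c1]
      push_cast
      ring
    · have c2 : ((K - (s - 1) : ℕ) : ℤ) = (K:ℤ) + 1 - s := by omega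
      rw [if_neg (by omega)] at hz ⊢
      rw [hz, c1, c2]
  · push_neg at hsK
    have h1 : permCount Set.univ Y n s = 0 := permVanish Y n s hsK
    by_cases hs2 : s = K + 1
    · have h0 : K - (s - 1) = 0 := by omega
      rw [h1, h0, mul_zero, zero_mul, add_zero] at hrec
      rw [hrec, h1]
      have : ((K:ℤ) + 1 - s) = 0 := by omega
      rw [this]
      push_cast
      ring
    · have h2 : permCount Set.univ Y n (s-1) = 0 := permVanish Y n (s-1) (by omega)
      rw [h1, mul_zero, zero_add] at hrec
      rw [if_neg (by omega), h2] at hrec ⊢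
      rw [hrec, h1, mul_zero] 
      push_cast
      ring

noncomputable def RHS1 (k m j s : ℕ) : ℤ :=
  (Nat.factorial ((k - 1) * m + j) : ℤ) *
    ∑ r ∈ Finset.range (s + 1),
      (-1) ^ (s - r) * (Nat.choose ((k - 1) * m + j + r) r : ℤ) *
        (Nat.choose (k * m + j + 1) (s - r) : ℤ) *
        ∏ i ∈ Finset.Icc 1 m, (1 + (r : ℤ) + ((k : ℤ) - 1) * i)

noncomputable def RHS2 (k m j s : ℕ) : ℤ :=
  (Nat.factorial ((k - 1) * m + j) : ℤ) *
    ∑ r ∈ Finset.range (m + 1 - s),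
      (-1) ^ (m - s - r) * (Nat.choose ((k - 1) * m + j + r) r : ℤ) *
        (Nat.choose (k * m + j + 1) (m - s - r) : ℤ) *
        ∏ i ∈ Finset.range m, ((r : ℤ) + (j : ℤ) + ((k : ℤ) - 1) * i)

lemma RHS1_form (k' m j s : ℕ) :
    RHS1 (k'+1) m j s = ((k'*m+j).factorial : ℤ) *
      ∑ r ∈ range (s+1), (-1)^(s-r) * ((k'*m+j+r).choose r : ℤ) *
        ((k'*m+j+m+1).choose (s-r) : ℤ) * ∏ i ∈ Icc 1 m, (1+(r:ℤ)+(k':ℤ)*i) := by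
  unfold RHS1
  have h1 : (k'+1-1)*m+j = k'*m+j := by simp
  have h2 : (k'+1)*m+j+1 = k'*m+j+m+1 := by ring
  rw [h1, h2]
  congr 1
  apply sum_congr rfl
  intro r _
  have h3 : (((k'+1 : ℕ)):ℤ) - 1 = (k':ℤ) := by push_cast; ring
  rw [h3]

lemma RHS2_form (k' m j s : ℕ) :
    RHS2 (k'+1) m j s = ((k'*m+j).factorial : ℤ) *
      ∑ r ∈ range (m+1-s), (-1)^(m-s-r) * ((k'*m+j+r).choose r : ℤ) *
        ((k'*m+j+m+1).choose (m-s-r) : ℤ) * ∏ i ∈ range m, ((r:ℤ)+(j:ℤ)+(k':ℤ)*i) := by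
  unfold RHS2
  have h1 : (k'+1-1)*m+j = k'*m+j := by simp
  have h2 : (k'+1)*m+j+1 = k'*m+j+m+1 := by ring
  rw [h1, h2]
  congr 1
  apply sum_congr rfl
  intro r _
  have h3 : (((k'+1 : ℕ)):ℤ) - 1 = (k':ℤ) := by push_cast; ring
  rw [h3]

lemma RHS1_stepa (k' m j s : ℕ) :
    RHS1 (k'+1) m (j+1) s
      = (((k'*m+j : ℕ) : ℤ) + 1 + s) * RHS1 (k'+1) m j s
        + ((m:ℤ) + 1 - s) * (if s = 0 then 0 else RHS1 (k'+1) m j (s-1)) := by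
  have hL := RHS1_form k' m (j+1) s
  have e1 : k'*m+(j+1) = k'*m+j+1 := by ring
  rw [e1] at hL
  set A := k'*m+j with hA
  set g : ℕ → ℤ := fun r => ∏ i ∈ Icc 1 m, (1+(r:ℤ)+(k':ℤ)*i) with hg
  have key : ∀ r ∈ range (s+1),
      ((A+1).factorial : ℤ) * ((-1)^(s-r) * ((A+1+r).choose r : ℤ) *
        ((A+1+m+1).choose (s-r) : ℤ) * g r)
      = (A.factorial : ℤ) * ((-1)^(s-r) * ((A:ℤ)+1+r) * ((A+r).choose r : ℤ) *
        ((A+m+2).choose (s-r) : ℤ) * g r) := by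
    intro r _
    have h1 := succ_mul_chooseZ' A r
    have h2 : ((A+1).factorial : ℤ) = ((A:ℤ)+1) * (A.factorial : ℤ) := by
      rw [Nat.factorial_succ]; push_cast; ring
    have h3 : A+1+m+1 = A+m+2 := by ring
    rw [h2, h3]
    linear_combination ((-1:ℤ)^(s-r) * ((A+m+2).choose (s-r) : ℤ) * g r
      * (A.factorial : ℤ)) * h1
  rw [hL, Finset.mul_sum, sum_congr rfl key, ← Finset.mul_sum, core1 A m s g]
  rw [RHS1_form k' m j s]
  rcases Nat.eq_zero_or_pos s with hs0 | hs1
  · subst hs0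
    rw [if_pos rfl]
    simp only [range_zero, sum_empty, mul_zero, add_zero]
    ring
  · rw [if_neg (by omega), RHS1_form k' m j (s-1)]
    have e2 : s - 1 + 1 = s := by omega
    rw [e2]
    have e3 : ∀ r ∈ range s, (-1:ℤ)^(s-1-r) * ((A+r).choose r : ℤ) *
        ((A+m+1).choose (s-1-r) : ℤ) * g r
        = (-1:ℤ)^(s-1-r) * ((A+r).choose r : ℤ) * ((A+m+1).choose (s-1-r) : ℤ) * g r :=
      fun r _ => rfl
    ring

lemma RHS1_stepb (k' m s : ℕ) :
    RHS1 (k'+1) (m+1) 0 s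
      = (((k'*m+k' : ℕ) : ℤ) + 1 + s) * RHS1 (k'+1) m k' s
        + ((m:ℤ) + 1 - s) * (if s = 0 then 0 else RHS1 (k'+1) m k' (s-1)) := by
  have hL := RHS1_form k' (m+1) 0 s
  have e1 : k'*(m+1)+0 = k'*m+k' := by ring
  have e2 : k'*m+k'+(m+1)+1 = k'*m+k'+m+2 := by ring
  rw [e1, e2] at hL
  set A := k'*m+k' with hA
  set g : ℕ → ℤ := fun r => ∏ i ∈ Icc 1 m, (1+(r:ℤ)+(k':ℤ)*i) with hg
  have key : ∀ r ∈ range (s+1),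
      (-1:ℤ)^(s-r) * ((A+r).choose r : ℤ) * ((A+m+2).choose (s-r) : ℤ) *
        ∏ i ∈ Icc 1 (m+1), (1+(r:ℤ)+(k':ℤ)*i)
      = (-1)^(s-r) * ((A:ℤ)+1+r) * ((A+r).choose r : ℤ) *
        ((A+m+2).choose (s-r) : ℤ) * g r := by
    intro r _
    rw [Finset.prod_Icc_succ_top (by omega : 1 ≤ m+1)]
    have h4 : (1+(r:ℤ)+(k':ℤ)*((m+1:ℕ):ℤ)) = (A:ℤ)+1+r := by
      rw [hA]; push_cast; ring
    rw [h4, hg]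
    ring
  rw [hL, sum_congr rfl key, core1 A m s g]
  rw [RHS1_form k' m k' s]
  rcases Nat.eq_zero_or_pos s with hs0 | hs1
  · subst hs0
    rw [if_pos rfl]
    simp only [range_zero, sum_empty, mul_zero, add_zero]
    ring
  · rw [if_neg (by omega), RHS1_form k' m k' (s-1)]
    have e3 : s - 1 + 1 = s := by omega
    rw [e3]
    ring

lemma RHS2_zero (k m j s : ℕ) (h : m < s) : RHS2 k m j s = 0 := by
  unfold RHS2
  rw [show m+1-s = 0 from by omega]
  simp

lemma RHS2_tail (k' j u s m : ℕ) (hm : m = u + s) :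
    ((k'*m+j).factorial : ℤ) *
      ∑ r ∈ range (u+2), (-1:ℤ)^(u+1-r) * (r:ℤ) * ((k'*m+j+r).choose r : ℤ) *
        ((k'*m+j+m+2).choose (u+1-r) : ℤ) *
        (∏ i ∈ range m, ((r:ℤ)+(j:ℤ)+(k':ℤ)*i))
    = (((k'*m+j : ℕ) : ℤ) + 1 + s) * RHS2 (k'+1) m j s
      + ((m:ℤ) + 1 - s) * (if s = 0 then 0 else RHS2 (k'+1) m j (s-1)) := by
  have hcore := core2 (k'*m+j) m u (fun t => ∏ i ∈ range m, ((t:ℤ)+(j:ℤ)+(k':ℤ)*i))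
  rw [hcore, RHS2_form k' m j s]
  have e2 : m+1-s = u+1 := by omega
  have hS1 : ∑ r ∈ range (m+1-s), (-1:ℤ)^(m-s-r) * ((k'*m+j+r).choose r : ℤ) *
      ((k'*m+j+m+1).choose (m-s-r) : ℤ) * ∏ i ∈ range m, ((r:ℤ)+(j:ℤ)+(k':ℤ)*i)
      = ∑ r ∈ range (u+1), (-1:ℤ)^(u-r) * ((k'*m+j+r).choose r : ℤ) *
        ((k'*m+j+m+1).choose (u-r) : ℤ) * ∏ i ∈ range m, ((r:ℤ)+(j:ℤ)+(k':ℤ)*i) := by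
    rw [e2]
    apply sum_congr rfl
    intro r _
    rw [show m-s-r = u-r from by omega]
  rw [hS1]
  rcases Nat.eq_zero_or_pos s with hs0 | hs1
  · have hu : u = m := by omega
    subst hu
    rw [if_pos hs0, mul_zero, add_zero]
    have hT : ∑ r ∈ range (u+2), (-1:ℤ)^(u+1-r) * ((k'*u+j+r).choose r : ℤ) *
        ((k'*u+j+u+1).choose (u+1-r) : ℤ) * ∏ i ∈ range u, ((r:ℤ)+(j:ℤ)+(k':ℤ)*i) = 0 := by
      have hTz := Tzero (k'*u+j) u (fun i => (j:ℤ)+(k':ℤ)*i)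
      rw [← hTz]
      apply sum_congr rfl
      intro r _
      congr 1
      apply prod_congr rfl
      intro i _
      ring
    rw [hT, mul_zero, add_zero, hs0]
    push_cast
    ring
  · rw [if_neg (by omega), RHS2_form k' m j (s-1)]
    have e4 : m+1-(s-1) = u+2 := by omega
    have hS2 : ∑ r ∈ range (m+1-(s-1)), (-1:ℤ)^(m-(s-1)-r) * ((k'*m+j+r).choose r : ℤ) *
        ((k'*m+j+m+1).choose (m-(s-1)-r) : ℤ) * ∏ i ∈ range m, ((r:ℤ)+(j:ℤ)+(k':ℤ)*i)
        = ∑ r ∈ range (u+2), (-1:ℤ)^(u+1-r) * ((k'*m+j+r).choose r : ℤ) *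
          ((k'*m+j+m+1).choose (u+1-r) : ℤ) * ∏ i ∈ range m, ((r:ℤ)+(j:ℤ)+(k':ℤ)*i) := by
      rw [e4]
      apply sum_congr rfl
      intro r _
      rw [show m-(s-1)-r = u+1-r from by omega]
    rw [hS2]
    have hms : (m:ℤ) = (u:ℤ) + s := by exact_mod_cast congrArg (Nat.cast (R := ℤ)) hm
    push_cast
    rw [hms]
    ring

lemma RHS2_stepa (k' m j s : ℕ) :
    RHS2 (k'+1) m (j+1) s
      = (((k'*m+j : ℕ) : ℤ) + 1 + s) * RHS2 (k'+1) m j s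
        + ((m:ℤ) + 1 - s) * (if s = 0 then 0 else RHS2 (k'+1) m j (s-1)) := by
  by_cases hsm : s ≤ m
  · obtain ⟨u, hm⟩ : ∃ u, m = u + s := ⟨m - s, by omega⟩
    have hL := RHS2_form k' m (j+1) s
    have e1 : k'*m+(j+1) = k'*m+j+1 := by ring
    have e2 : m+1-s = u+1 := by omega
    have e3 : k'*m+j+1+m+1 = k'*m+j+m+2 := by ring
    rw [e1, e2, e3] at hL
    have hshift : ∀ r ∈ range (u+1),
        (-1:ℤ)^(m-s-r) * ((k'*m+j+1+r).choose r : ℤ) * ((k'*m+j+m+2).choose (m-s-r) : ℤ) *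
          ∏ i ∈ range m, ((r:ℤ)+((j+1:ℕ):ℤ)+(k':ℤ)*i)
        = (-1:ℤ)^(u-r) * ((k'*m+j+1+r).choose r : ℤ) * ((k'*m+j+m+2).choose (u-r) : ℤ) *
          ∏ i ∈ range m, (((r+1:ℕ):ℤ)+(j:ℤ)+(k':ℤ)*i) := by
      intro r _
      rw [show m-s-r = u-r from by omega]
      congr 1
      apply prod_congr rfl
      intro i _
      push_cast
      ring
    rw [sum_congr rfl hshift] at hL
    have hcoreL : ∑ r ∈ range (u+2), (-1:ℤ)^(u+1-r) * (r:ℤ) * ((k'*m+j+r).choose r : ℤ) *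
        ((k'*m+j+m+2).choose (u+1-r) : ℤ) * ∏ i ∈ range m, ((r:ℤ)+(j:ℤ)+(k':ℤ)*i)
      = (((k'*m+j : ℕ) : ℤ) + 1) * ∑ r ∈ range (u+1), (-1:ℤ)^(u-r) * ((k'*m+j+1+r).choose r : ℤ) *
        ((k'*m+j+m+2).choose (u-r) : ℤ) * ∏ i ∈ range m, (((r+1:ℕ):ℤ)+(j:ℤ)+(k':ℤ)*i) := by
      rw [Finset.sum_range_succ']
      simp only [Nat.cast_zero, mul_zero, zero_mul, add_zero]
      rw [Finset.mul_sum]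
      apply sum_congr rfl
      intro x hx
      rw [mem_range] at hx
      rw [show u+1-(x+1) = u-x from by omega, show k'*m+j+(x+1) = k'*m+j+1+x from by ring]
      have h6 := chooseZ (k'*m+j+1+x) x
      push_cast at h6 ⊢
      linear_combination ((-1:ℤ)^(u-x) * ((k'*m+j+m+2).choose (u-x) : ℤ) *
        ∏ i ∈ range m, (((x:ℤ)+1)+(j:ℤ)+(k':ℤ)*i)) * h6
    have hfac : (((k'*m+j)+1).factorial : ℤ)
        = (((k'*m+j : ℕ) : ℤ) + 1) * ((k'*m+j).factorial : ℤ) := by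
      rw [Nat.factorial_succ]; push_cast; ring
    rw [hL, hfac, mul_comm ((((k'*m+j : ℕ) : ℤ)) + 1) ((k'*m+j).factorial : ℤ),
      mul_assoc, ← hcoreL, RHS2_tail k' j u s m hm]
  · have hz1 : RHS2 (k'+1) m (j+1) s = 0 := RHS2_zero _ _ _ _ (by omega)
    have hz2 : RHS2 (k'+1) m j s = 0 := RHS2_zero _ _ _ _ (by omega)
    rw [hz1, hz2, mul_zero, zero_add]
    by_cases hs1 : s = m+1
    · have hc : ((m:ℤ)+1-s) = 0 := by rw [hs1]; push_cast; ring
      rw [hc, zero_mul]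
    · have hz3 : RHS2 (k'+1) m j (s-1) = 0 := RHS2_zero _ _ _ _ (by omega)
      rw [if_neg (by omega), hz3, mul_zero]

lemma RHS2_stepb (k' m s : ℕ) :
    RHS2 (k'+1) (m+1) 0 s
      = (((k'*m+k' : ℕ) : ℤ) + 1 + s) * RHS2 (k'+1) m k' s
        + ((m:ℤ) + 1 - s) * (if s = 0 then 0 else RHS2 (k'+1) m k' (s-1)) := by
  by_cases hsm : s ≤ m
  · obtain ⟨u, hm⟩ : ∃ u, m = u + s := ⟨m - s, by omega⟩
    have hL := RHS2_form k' (m+1) 0 s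
    have e1 : k'*(m+1)+0 = k'*m+k' := by ring
    have e2 : m+1+1-s = u+2 := by omega
    have e3 : k'*m+k'+(m+1)+1 = k'*m+k'+m+2 := by ring
    rw [e1, e2, e3] at hL
    have hpe : ∀ r ∈ range (u+2),
        (-1:ℤ)^(m+1-s-r) * ((k'*m+k'+r).choose r : ℤ) *
          ((k'*m+k'+m+2).choose (m+1-s-r) : ℤ) *
          ∏ i ∈ range (m+1), ((r:ℤ)+((0:ℕ):ℤ)+(k':ℤ)*i)
        = (-1:ℤ)^(u+1-r) * (r:ℤ) * ((k'*m+k'+r).choose r : ℤ) *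
          ((k'*m+k'+m+2).choose (u+1-r) : ℤ) *
          (∏ i ∈ range m, ((r:ℤ)+((k':ℕ):ℤ)+(k':ℤ)*i)) := by
      intro r _
      have hfs : ∀ i ∈ range m, ((r:ℤ)+((0:ℕ):ℤ)+(k':ℤ)*(((i+1:ℕ)):ℤ))
          = ((r:ℤ)+((k':ℕ):ℤ)+(k':ℤ)*i) := by
        intro i _
        push_cast
        ring
      rw [show m+1-s-r = u+1-r from by omega, Finset.prod_range_succ',
        prod_congr rfl hfs]
      push_cast
      ring
    rw [sum_congr rfl hpe] at hL
    rw [hL, RHS2_tail k' k' u s m hm]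
  · have hz2 : RHS2 (k'+1) m k' s = 0 := RHS2_zero _ _ _ _ (by omega)
    by_cases hs1 : s = m+1
    · subst hs1
      have hz1 : RHS2 (k'+1) (m+1) 0 (m+1) = 0 := by
        unfold RHS2
        rw [show m+1+1-(m+1) = 1 from by omega, Finset.sum_range_one]
        have hpz : (∏ i ∈ range (m+1),
            (((0:ℕ):ℤ)+((0:ℕ):ℤ)+(((k'+1:ℕ):ℤ)-1)*(i:ℤ))) = 0 := by
          apply Finset.prod_eq_zero (Finset.mem_range.mpr (show 0 < m+1 by omega))
          push_cast
          ring
        rw [hpz, mul_zero, mul_zero]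
      rw [hz1, hz2, mul_zero, zero_add,
        show (m:ℤ)+1-((m+1:ℕ):ℤ) = 0 from by push_cast; ring, zero_mul]
    · have hz1 : RHS2 (k'+1) (m+1) 0 s = 0 := RHS2_zero _ _ _ _ (by omega)
      have hz3 : RHS2 (k'+1) m k' (s-1) = 0 := RHS2_zero _ _ _ _ (by omega)
      rw [hz1, hz2, hz3, mul_zero, zero_add, if_neg (by omega), mul_zero]

lemma alt1 (s : ℕ) (hs : 1 ≤ s) :
    ∑ r ∈ range (s+1), (-1:ℤ)^(s-r) * (Nat.choose 1 (s-r) : ℤ) = 0 := by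
  have hrefl := Finset.sum_range_reflect
    (fun r => (-1:ℤ)^(s-r) * (Nat.choose 1 (s-r) : ℤ)) (s+1)
  rw [← hrefl]
  have hc : ∀ j ∈ range (s+1), (-1:ℤ)^(s-(s+1-1-j)) * (Nat.choose 1 (s-(s+1-1-j)) : ℤ)
      = (-1:ℤ)^j * (Nat.choose 1 j : ℤ) := by
    intro j hj
    rw [mem_range] at hj
    rw [show s-(s+1-1-j) = j from by omega]
  rw [sum_congr rfl hc,
    ← Finset.sum_subset (Finset.range_subset_range.mpr (by omega : 2 ≤ s+1))]
  · simp [Finset.sum_range_succ]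
  · intro x _ hx
    rw [mem_range, not_lt] at hx
    rw [Nat.choose_eq_zero_of_lt (by omega)]
    simp

lemma RHS1_base (k' s : ℕ) : RHS1 (k'+1) 0 0 s = if s = 0 then 1 else 0 := by
  rw [RHS1_form]
  have hicc : (Icc 1 0 : Finset ℕ) = ∅ := Finset.Icc_eq_empty (by omega)
  simp only [Nat.mul_zero, Nat.zero_add, Nat.add_zero, hicc, Finset.prod_empty, mul_one,
    Nat.choose_self, Nat.cast_one, one_mul, Nat.factorial_zero]
  rcases Nat.eq_zero_or_pos s with h0 | h1
  · subst h0
    simp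
  · rw [alt1 s h1, if_neg (by omega)]

lemma RHS2_base (k' s : ℕ) : RHS2 (k'+1) 0 0 s = if s = 0 then 1 else 0 := by
  rw [RHS2_form]
  have e : k'*0+0 = 0 := by ring
  rw [e]
  rcases Nat.eq_zero_or_pos s with h0 | h1
  · subst h0
    simp
  · rw [show 0+1-s = 0 from by omega, if_neg (by omega)]
    simp

lemma permCount_zero (Y : Set ℕ) (s : ℕ) :
    permCount Set.univ Y 0 s = if s = 0 then 1 else 0 := by
  unfold permCount
  have hdes : ∀ σ : Equiv.Perm (Fin 0), desXY Set.univ Y (fun i => (σ i : ℕ)+1) = 0 := by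
    intro σ
    unfold desXY
    simp
  rcases Nat.eq_zero_or_pos s with h0 | h1
  · subst h0
    rw [if_pos rfl]
    have hft : (Finset.univ.filter (fun σ : Equiv.Perm (Fin 0) =>
        desXY Set.univ Y (fun i => (σ i : ℕ)+1) = 0)) = Finset.univ := by
      apply Finset.filter_true_of_mem
      intro σ _
      exact hdes σ
    rw [hft, Finset.card_univ]
    simp [Fintype.card_perm]
  · rw [if_neg (by omega), Finset.card_eq_zero, Finset.filter_eq_empty_iff]
    intro σ _
    rw [hdes σ]
    omega

lemma mainInd (k' : ℕ) : ∀ n, ∀ s : ℕ,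
    ((permCount Set.univ {x : ℕ | ∃ i, 1 ≤ i ∧ x = (k'+1) * i} n s : ℕ) : ℤ)
        = RHS1 (k'+1) (n/(k'+1)) (n%(k'+1)) s
      ∧ ((permCount Set.univ {x : ℕ | ∃ i, 1 ≤ i ∧ x = (k'+1) * i} n s : ℕ) : ℤ)
        = RHS2 (k'+1) (n/(k'+1)) (n%(k'+1)) s := by
  intro n
  induction n with
  | zero =>
    intro s
    rw [Nat.zero_div, Nat.zero_mod, permCount_zero, RHS1_base, RHS2_base]
    constructor <;> · push_cast; rfl
  | succ n ih =>
    intro s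
    have hk1 : 0 < k'+1 := by omega
    obtain ⟨m, hm⟩ : ∃ m, n/(k'+1) = m := ⟨_, rfl⟩
    obtain ⟨j, hj⟩ : ∃ j, n%(k'+1) = j := ⟨_, rfl⟩
    have hjk : j < k'+1 := by rw [← hj]; exact Nat.mod_lt _ hk1
    have hnd : (k'+1)*m + j = n := by rw [← hm, ← hj]; exact Nat.div_add_mod n (k'+1)
    have hrecZ := QZrec {x : ℕ | ∃ i, 1 ≤ i ∧ x = (k'+1)*i} n s
    rw [Kval (k'+1) (by omega) n, hm] at hrecZ
    have hn : (n:ℤ) = ((k'+1):ℤ)*(m:ℤ)+(j:ℤ) := by exact_mod_cast (congrArg (Nat.cast (R:=ℤ)) hnd).symm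
    have hc1 : (n:ℤ) + 1 - (m:ℤ) + (s:ℤ) = ((k'*m+j : ℕ):ℤ) + 1 + s := by
      push_cast
      linear_combination hn
    obtain ⟨ih1, ih2⟩ := ih s
    rw [hm, hj] at ih1 ih2
    have hite1 : (if s = 0 then (0:ℤ) else
        ((permCount Set.univ {x : ℕ | ∃ i, 1 ≤ i ∧ x = (k'+1)*i} n (s-1) : ℕ) : ℤ))
        = (if s = 0 then 0 else RHS1 (k'+1) m j (s-1)) := by
      by_cases h0 : s = 0
      · rw [if_pos h0, if_pos h0]
      · rw [if_neg h0, if_neg h0]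
        have := (ih (s-1)).1
        rw [hm, hj] at this
        exact this
    have hite2 : (if s = 0 then (0:ℤ) else
        ((permCount Set.univ {x : ℕ | ∃ i, 1 ≤ i ∧ x = (k'+1)*i} n (s-1) : ℕ) : ℤ))
        = (if s = 0 then 0 else RHS2 (k'+1) m j (s-1)) := by
      by_cases h0 : s = 0
      · rw [if_pos h0, if_pos h0]
      · rw [if_neg h0, if_neg h0]
        have := (ih (s-1)).2
        rw [hm, hj] at this
        exact this
    rcases Nat.lt_or_ge (j+1) (k'+1) with hcase | hcase
    · have hd1 : (n+1)/(k'+1) = m := by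
        rw [show n+1 = (k'+1)*m+(j+1) from by omega, Nat.mul_add_div hk1,
          Nat.div_eq_of_lt hcase, Nat.add_zero]
      have hd2 : (n+1)%(k'+1) = j+1 := by
        rw [show n+1 = (k'+1)*m+(j+1) from by omega, Nat.mul_add_mod,
          Nat.mod_eq_of_lt hcase]
      rw [hd1, hd2]
      constructor
      · rw [hrecZ, ih1, hite1, RHS1_stepa k' m j s, hc1]
      · rw [hrecZ, ih2, hite2, RHS2_stepa k' m j s, hc1]
    · have hjq : j = k' := by omega
      rw [hjq] at ih1 ih2 hite1 hite2 hc1 hnd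
      have hnn : n+1 = (k'+1)*(m+1) := by
        rw [← hnd]
        ring
      have hd1 : (n+1)/(k'+1) = m+1 := by
        rw [hnn]
        exact Nat.mul_div_cancel_left _ hk1
      have hd2 : (n+1)%(k'+1) = 0 := by
        rw [hnn]
        exact Nat.mul_mod_right _ _
      rw [hd1, hd2]
      constructor
      · rw [hrecZ, ih1, hite1, RHS1_stepb k' m s, hc1]
      · rw [hrecZ, ih2, hite2, RHS2_stepb k' m s, hc1]

theorem stmt10 (k : ℕ) (hk : 1 ≤ k) (m j s : ℕ) (hj : j ≤ k - 1) :
    (permCount Set.univ {x : ℕ | ∃ i, 1 ≤ i ∧ x = k * i} (k * m + j) s : ℤ) =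
      (Nat.factorial ((k - 1) * m + j) : ℤ) *
        ∑ r ∈ Finset.range (s + 1),
          (-1) ^ (s - r) * (Nat.choose ((k - 1) * m + j + r) r : ℤ) *
            (Nat.choose (k * m + j + 1) (s - r) : ℤ) *
            ∏ i ∈ Finset.Icc 1 m, (1 + (r : ℤ) + ((k : ℤ) - 1) * i) ∧
    (permCount Set.univ {x : ℕ | ∃ i, 1 ≤ i ∧ x = k * i} (k * m + j) s : ℤ) =
      (Nat.factorial ((k - 1) * m + j) : ℤ) *
        ∑ r ∈ Finset.range (m + 1 - s),
          (-1) ^ (m - s - r) * (Nat.choose ((k - 1) * m + j + r) r : ℤ) *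
            (Nat.choose (k * m + j + 1) (m - s - r) : ℤ) *
            ∏ i ∈ Finset.range m, ((r : ℤ) + (j : ℤ) + ((k : ℤ) - 1) * i) := by
  obtain ⟨k', rfl⟩ : ∃ k', k = k'+1 := ⟨k-1, by omega⟩
  have hjk : j < k'+1 := by omega
  have h := mainInd k' ((k'+1)*m+j) s
  have hd1 : ((k'+1)*m+j)/(k'+1) = m := by
    rw [Nat.mul_add_div (by omega), Nat.div_eq_of_lt hjk, Nat.add_zero]
  have hd2 : ((k'+1)*m+j)%(k'+1) = j := by
    rw [Nat.mul_add_mod, Nat.mod_eq_of_lt hjk]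
  rw [hd1, hd2] at h
  exact ⟨h.1, h.2⟩
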